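/- Let A satisfy RIP of order 2k with constant δ_{2k}, let h ∈ R^n, let I with |I| ≤ k and J the k largest-magnitude indices of h in I^c, and suppose ‖Ah‖₂ ≤ 2ε. Then (1-δ_{2k})‖h_{I∪J}‖₂ ≤ √2 δ_{2k} ‖h_{I^c}‖₁/√k + (1+δ_{2k})^{1/2}·2ε. -/

import Mathlib

open Finset

def IsSparse {n : ℕ} (s : ℕ) (x : Fin n → ℝ) : Prop :=
  (Finset.univ.filter (fun i => x i ≠ 0)).card ≤ s

def IsRIP {m n : ℕ} (A : Matrix (Fin m) (Fin n) ℝ) (s : ℕ) (δ : ℝ) : Prop :=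
  ∀ x : Fin n → ℝ, IsSparse s x →
    (1 - δ) * ∑ i, x i ^ 2 ≤ ∑ j, A.mulVec x j ^ 2 ∧
      ∑ j, A.mulVec x j ^ 2 ≤ (1 + δ) * ∑ i, x i ^ 2

lemma sparse_of_subset {n s : ℕ} {x : Fin n → ℝ} {S : Finset (Fin n)}
    (hx : ∀ i, i ∉ S → x i = 0) (hc : S.card ≤ s) : IsSparse s x := by
  refine le_trans (Finset.card_le_card ?_) hc
  intro i hi
  simp only [mem_filter] at hi
  by_contra hiS
  exact hi.2 (hx i hiS)

lemma cross_half {m n k : ℕ} {A : Matrix (Fin m) (Fin n) ℝ} {δ : ℝ}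
    (hRIP : IsRIP A (2*k) δ) (x y : Fin n → ℝ) (S T : Finset (Fin n))
    (hx : ∀ i, i ∉ S → x i = 0) (hy : ∀ i, i ∉ T → y i = 0)
    (hST : Disjoint S T) (hcard : S.card + T.card ≤ 2*k) :
    (∑ j, A.mulVec x j * A.mulVec y j) ≤ δ * ((∑ i, x i ^2) + ∑ i, y i^2) / 2 := by
  have hcu : (S ∪ T).card ≤ 2 * k := le_trans (Finset.card_union_le S T) hcard
  have hmem : ∀ i : Fin n, i ∉ S ∪ T → x i = 0 ∧ y i = 0 := by
    intro i hi
    simp only [Finset.mem_union, not_or] at hi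
    exact ⟨hx i hi.1, hy i hi.2⟩
  have hadd : IsSparse (2*k) (x + y) :=
    sparse_of_subset (S := S ∪ T) (fun i hi => by
      have := hmem i hi; simp [Pi.add_apply, this.1, this.2]) hcu
  have hsub : IsSparse (2*k) (x - y) :=
    sparse_of_subset (S := S ∪ T) (fun i hi => by
      have := hmem i hi; simp [Pi.sub_apply, this.1, this.2]) hcu
  have hxy0 : ∑ i, x i * y i = 0 := by
    apply Finset.sum_eq_zero
    intro i _
    by_cases hiS : i ∈ S
    · rw [hy i (Finset.disjoint_left.mp hST hiS)]; ring
    · rw [hx i hiS]; ring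
  have hplus := hRIP (x + y) hadd
  have hminus := hRIP (x - y) hsub
  have e1 : ∑ j, A.mulVec (x + y) j ^ 2 =
      (∑ j, A.mulVec x j ^2) + 2 * (∑ j, A.mulVec x j * A.mulVec y j) + ∑ j, A.mulVec y j ^2 := by
    simp only [Matrix.mulVec_add, Pi.add_apply, add_sq, Finset.sum_add_distrib,
      Finset.mul_sum, mul_assoc]
  have e2 : ∑ j, A.mulVec (x - y) j ^ 2 =
      (∑ j, A.mulVec x j ^2) - 2 * (∑ j, A.mulVec x j * A.mulVec y j) + ∑ j, A.mulVec y j ^2 := by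
    simp only [Matrix.mulVec_sub, Pi.sub_apply, sub_sq, Finset.sum_add_distrib,
      Finset.sum_sub_distrib, Finset.mul_sum, mul_assoc]
  have e3 : ∑ i, (x + y) i ^ 2 = (∑ i, x i ^2) + ∑ i, y i ^2 := by
    simp only [Pi.add_apply, add_sq, Finset.sum_add_distrib, Finset.mul_sum, mul_assoc,
      ← Finset.mul_sum, hxy0]
    ring
  have e4 : ∑ i, (x - y) i ^ 2 = (∑ i, x i ^2) + ∑ i, y i ^2 := by
    simp only [Pi.sub_apply, sub_sq, Finset.sum_add_distrib, Finset.sum_sub_distrib,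
      Finset.mul_sum, mul_assoc, ← Finset.mul_sum, hxy0]
    ring
  have h1 := hplus.2
  have h2 := hminus.1
  rw [e1, e3] at h1
  rw [e2, e4] at h2
  linarith

lemma cross_abs {m n k : ℕ} {A : Matrix (Fin m) (Fin n) ℝ} {δ : ℝ}
    (hRIP : IsRIP A (2*k) δ) (x y : Fin n → ℝ) (S T : Finset (Fin n))
    (hx : ∀ i, i ∉ S → x i = 0) (hy : ∀ i, i ∉ T → y i = 0)
    (hST : Disjoint S T) (hcard : S.card + T.card ≤ 2*k) :
    |∑ j, A.mulVec x j * A.mulVec y j| ≤ δ * ((∑ i, x i ^2) + ∑ i, y i^2) / 2 := by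
  rw [abs_le]
  refine ⟨?_, cross_half hRIP x y S T hx hy hST hcard⟩
  have := cross_half hRIP x (-y) S T hx (fun i hi => by simp [hy i hi]) hST hcard
  rw [Matrix.mulVec_neg] at this
  simp only [Pi.neg_apply, mul_neg, Finset.sum_neg_distrib, neg_sq] at this
  linarith

lemma cross_mul {m n k : ℕ} {A : Matrix (Fin m) (Fin n) ℝ} {δ : ℝ} (hδ : 0 ≤ δ)
    (hRIP : IsRIP A (2*k) δ) (x y : Fin n → ℝ) (S T : Finset (Fin n))
    (hx : ∀ i, i ∉ S → x i = 0) (hy : ∀ i, i ∉ T → y i = 0)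
    (hST : Disjoint S T) (hcard : S.card + T.card ≤ 2*k) :
    |∑ j, A.mulVec x j * A.mulVec y j| ≤
      δ * Real.sqrt (∑ i, x i ^2) * Real.sqrt (∑ i, y i ^2) := by
  set X := ∑ i, x i ^2 with hXdef
  set Y := ∑ i, y i ^2 with hYdef
  have hX0 : 0 ≤ X := Finset.sum_nonneg (fun i _ => sq_nonneg _)
  have hY0 : 0 ≤ Y := Finset.sum_nonneg (fun i _ => sq_nonneg _)
  rcases eq_or_lt_of_le hX0 with hX | hX
  · have hx0 : ∀ i, x i = 0 := by
      intro i
      have := (Finset.sum_eq_zero_iff_of_nonneg (fun i _ => sq_nonneg (x i))).mp hX.symm i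
        (Finset.mem_univ i)
      exact pow_eq_zero_iff (by norm_num) |>.mp this
    have hAx : ∀ j, A.mulVec x j = 0 := by
      intro j
      simp [Matrix.mulVec, dotProduct, hx0]
    simp only [hAx, zero_mul, Finset.sum_const_zero, abs_zero]
    positivity
  rcases eq_or_lt_of_le hY0 with hY | hY
  · have hy0 : ∀ i, y i = 0 := by
      intro i
      have := (Finset.sum_eq_zero_iff_of_nonneg (fun i _ => sq_nonneg (y i))).mp hY.symm i
        (Finset.mem_univ i)
      exact pow_eq_zero_iff (by norm_num) |>.mp this
    have hAy : ∀ j, A.mulVec y j = 0 := by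
      intro j
      simp [Matrix.mulVec, dotProduct, hy0]
    simp only [hAy, mul_zero, Finset.sum_const_zero, abs_zero]
    positivity
  have hsX : Real.sqrt X > 0 := Real.sqrt_pos.mpr hX
  have hsY : Real.sqrt Y > 0 := Real.sqrt_pos.mpr hY
  have hmsX : Real.sqrt X * Real.sqrt X = X := Real.mul_self_sqrt hX0
  have hmsY : Real.sqrt Y * Real.sqrt Y = Y := Real.mul_self_sqrt hY0
  set c : ℝ := Real.sqrt (Real.sqrt Y / Real.sqrt X) with hcdef
  have hc : 0 < c := Real.sqrt_pos.mpr (div_pos hsY hsX)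
  have hc2 : c ^ 2 = Real.sqrt Y / Real.sqrt X := Real.sq_sqrt (le_of_lt (div_pos hsY hsX))
  have key := cross_abs hRIP (c • x) (c⁻¹ • y) S T
    (fun i hi => by simp [hx i hi]) (fun i hi => by simp [hy i hi]) hST hcard
  have edot : ∑ j, A.mulVec (c • x) j * A.mulVec (c⁻¹ • y) j
      = ∑ j, A.mulVec x j * A.mulVec y j := by
    rw [Matrix.mulVec_smul, Matrix.mulVec_smul]
    apply Finset.sum_congr rfl
    intro j _
    simp only [Pi.smul_apply, smul_eq_mul]
    field_simp
  have eX : ∑ i, (c • x) i ^2 = c^2 * X := by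
    simp only [Pi.smul_apply, smul_eq_mul, mul_pow, hXdef, Finset.mul_sum]
  have eY : ∑ i, (c⁻¹ • y) i ^2 = (c^2)⁻¹ * Y := by
    simp only [Pi.smul_apply, smul_eq_mul, mul_pow, hYdef, Finset.mul_sum, inv_pow]
  rw [edot, eX, eY] at key
  have efin : δ * (c ^ 2 * X + (c ^ 2)⁻¹ * Y) / 2 = δ * Real.sqrt X * Real.sqrt Y := by
    rw [hc2]
    field_simp
    linear_combination (-(δ*Real.sqrt Y*Real.sqrt Y))*hmsX + (-(δ*Real.sqrt X*Real.sqrt X))*hmsY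
  rw [efin] at key
  exact key

lemma sum_sq_ite {n : ℕ} (h : Fin n → ℝ) (s : Finset (Fin n)) :
    ∑ i, (if i ∈ s then h i else 0) ^ 2 = ∑ i ∈ s, h i ^ 2 := by
  have e : ∀ i, (if i ∈ s then h i else 0) ^ 2 = (if i ∈ s then h i ^ 2 else 0) := by
    intro i; split <;> simp
  simp_rw [e]
  rw [Finset.sum_ite_mem, Finset.univ_inter]

lemma block_bound {m n k : ℕ} (hk : 0 < k) {A : Matrix (Fin m) (Fin n) ℝ} {δ : ℝ} (hδ0 : 0 ≤ δ)
    (hRIP : IsRIP A (2*k) δ) (h : Fin n → ℝ) (I J : Finset (Fin n)) (hI : I.card ≤ k)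
    (hJsub : J ⊆ Iᶜ) (hJk : J.card ≤ k)
    (b : List (Fin n)) (hbmem : ∀ i ∈ b, i ∈ Iᶜ \ J) (hblen : b.length ≤ k)
    (M : ℝ) (hM : 0 ≤ M) (hbM : ∀ i ∈ b, |h i| ≤ M) :
    |∑ j, A.mulVec (fun i => if i ∈ I ∪ J then h i else 0) j *
          A.mulVec (fun i => if i ∈ b then h i else 0) j| ≤
      Real.sqrt 2 * δ * Real.sqrt (∑ i ∈ I ∪ J, h i ^ 2) * (Real.sqrt k * M) := by
  classical
  set xI : Fin n → ℝ := fun i => if i ∈ I then h i else 0 with hxI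
  set xJ : Fin n → ℝ := fun i => if i ∈ J then h i else 0 with hxJ
  set vb : Fin n → ℝ := fun i => if i ∈ b then h i else 0 with hvb
  have hIJdisj : Disjoint I J := by
    rw [Finset.disjoint_left]
    intro i hiI hiJ
    exact (Finset.mem_compl.mp (hJsub hiJ)) hiI
  have hsplit : (fun i => if i ∈ I ∪ J then h i else 0) = xI + xJ := by
    funext i
    simp only [Pi.add_apply, hxI, hxJ, Finset.mem_union]
    by_cases hiI : i ∈ I <;> by_cases hiJ : i ∈ J
    · exact absurd hiJ (Finset.disjoint_left.mp hIJdisj hiI)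
    all_goals simp [hiI, hiJ]
  -- supports of the block vector
  have hvbsupp : ∀ i, i ∉ b.toFinset → vb i = 0 := by
    intro i hi
    simp only [hvb]
    rw [if_neg (fun hmem => hi (List.mem_toFinset.mpr hmem))]
  have hbcard : b.toFinset.card ≤ k := le_trans (List.toFinset_card_le b) hblen
  have hdisjI : Disjoint I b.toFinset := by
    rw [Finset.disjoint_left]
    intro i hiI hib
    exact (Finset.mem_compl.mp (Finset.mem_sdiff.mp (hbmem i (List.mem_toFinset.mp hib))).1) hiI
  have hdisjJ : Disjoint J b.toFinset := by
    rw [Finset.disjoint_left]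
    intro i hiJ hib
    exact (Finset.mem_sdiff.mp (hbmem i (List.mem_toFinset.mp hib))).2 hiJ
  have hcrossI := cross_mul hδ0 hRIP xI vb I b.toFinset
    (fun i hi => by simp [hxI, if_neg hi]) hvbsupp hdisjI
    (by omega)
  have hcrossJ := cross_mul hδ0 hRIP xJ vb J b.toFinset
    (fun i hi => by simp [hxJ, if_neg hi]) hvbsupp hdisjJ
    (by omega)
  have exI : ∑ i, xI i ^ 2 = ∑ i ∈ I, h i ^ 2 := sum_sq_ite h I
  have exJ : ∑ i, xJ i ^ 2 = ∑ i ∈ J, h i ^ 2 := sum_sq_ite h J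
  have evb : ∑ i, vb i ^ 2 = ∑ i ∈ b.toFinset, h i ^ 2 := by
    have : ∀ i, vb i = (if i ∈ b.toFinset then h i else 0) := by
      intro i; simp [hvb, List.mem_toFinset]
    rw [Finset.sum_congr rfl (fun i _ => by rw [this i])]
    exact sum_sq_ite h b.toFinset
  -- bound the block norm
  have hvbnorm : Real.sqrt (∑ i, vb i ^ 2) ≤ Real.sqrt k * M := by
    rw [evb]
    have h1 : ∑ i ∈ b.toFinset, h i ^ 2 ≤ (k : ℝ) * M ^ 2 := by
      calc ∑ i ∈ b.toFinset, h i ^ 2 ≤ ∑ _i ∈ b.toFinset, M ^ 2 := by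
            apply Finset.sum_le_sum
            intro i hi
            have := hbM i (List.mem_toFinset.mp hi)
            nlinarith [abs_nonneg (h i), sq_abs (h i)]
        _ = b.toFinset.card * M ^ 2 := by rw [Finset.sum_const, nsmul_eq_mul]
        _ ≤ (k : ℝ) * M ^ 2 := by
            apply mul_le_mul_of_nonneg_right _ (sq_nonneg M)
            exact_mod_cast hbcard
    calc Real.sqrt (∑ i ∈ b.toFinset, h i ^ 2) ≤ Real.sqrt ((k : ℝ) * M ^ 2) :=
          Real.sqrt_le_sqrt h1
      _ = Real.sqrt k * M := by
          rw [Real.sqrt_mul (Nat.cast_nonneg k), Real.sqrt_sq hM]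
  -- combine the I and J norms
  set a1 := Real.sqrt (∑ i ∈ I, h i ^ 2) with ha1
  set a2 := Real.sqrt (∑ i ∈ J, h i ^ 2) with ha2
  have ha1n : 0 ≤ a1 := Real.sqrt_nonneg _
  have ha2n : 0 ≤ a2 := Real.sqrt_nonneg _
  have hsum : a1 ^ 2 + a2 ^ 2 = ∑ i ∈ I ∪ J, h i ^ 2 := by
    rw [ha1, ha2, Real.sq_sqrt (Finset.sum_nonneg fun i _ => sq_nonneg _),
      Real.sq_sqrt (Finset.sum_nonneg fun i _ => sq_nonneg _),
      ← Finset.sum_union hIJdisj]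
  have hab : a1 + a2 ≤ Real.sqrt 2 * Real.sqrt (∑ i ∈ I ∪ J, h i ^ 2) := by
    rw [← Real.sqrt_mul (by norm_num : (0:ℝ) ≤ 2)]
    have h2 : (a1 + a2) ^ 2 ≤ 2 * ∑ i ∈ I ∪ J, h i ^ 2 := by
      rw [← hsum]; nlinarith [sq_nonneg (a1 - a2)]
    calc a1 + a2 = Real.sqrt ((a1 + a2) ^ 2) := (Real.sqrt_sq (by linarith)).symm
      _ ≤ _ := Real.sqrt_le_sqrt h2
  -- assemble
  rw [hsplit, Matrix.mulVec_add]
  simp only [Pi.add_apply, add_mul, Finset.sum_add_distrib]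
  have hvbn : 0 ≤ Real.sqrt (∑ i, vb i ^ 2) := Real.sqrt_nonneg _
  calc |(∑ j, A.mulVec xI j * A.mulVec vb j) + ∑ j, A.mulVec xJ j * A.mulVec vb j|
      ≤ |∑ j, A.mulVec xI j * A.mulVec vb j| + |∑ j, A.mulVec xJ j * A.mulVec vb j| :=
        abs_add_le _ _
    _ ≤ δ * a1 * Real.sqrt (∑ i, vb i ^ 2) + δ * a2 * Real.sqrt (∑ i, vb i ^ 2) := by
        rw [ha1, ha2, ← exI, ← exJ]
        exact add_le_add hcrossI hcrossJ
    _ = δ * (a1 + a2) * Real.sqrt (∑ i, vb i ^ 2) := by ring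
    _ ≤ δ * (a1 + a2) * (Real.sqrt k * M) := by
        apply mul_le_mul_of_nonneg_left hvbnorm
        positivity
    _ ≤ δ * (Real.sqrt 2 * Real.sqrt (∑ i ∈ I ∪ J, h i ^ 2)) * (Real.sqrt k * M) := by
        apply mul_le_mul_of_nonneg_right _ (by positivity)
        exact mul_le_mul_of_nonneg_left hab hδ0
    _ = Real.sqrt 2 * δ * Real.sqrt (∑ i ∈ I ∪ J, h i ^ 2) * (Real.sqrt k * M) := by ring

lemma tail_bound {m n k : ℕ} (hk : 0 < k) {A : Matrix (Fin m) (Fin n) ℝ} {δ : ℝ} (hδ0 : 0 ≤ δ)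
    (hRIP : IsRIP A (2*k) δ) (h : Fin n → ℝ) (I J : Finset (Fin n)) (hI : I.card ≤ k)
    (hJsub : J ⊆ Iᶜ) (hJk : J.card ≤ k) :
    ∀ (N : ℕ) (l : List (Fin n)), l.length ≤ N → l.Nodup →
      l.Pairwise (fun a b => |h b| ≤ |h a|) →
      (∀ i ∈ l, i ∈ Iᶜ \ J) → ∀ M : ℝ, 0 ≤ M → (∀ i ∈ l, |h i| ≤ M) →
      |∑ j, A.mulVec (fun i => if i ∈ I ∪ J then h i else 0) j *
            A.mulVec (fun i => if i ∈ l then h i else 0) j| ≤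
        Real.sqrt 2 * δ * Real.sqrt (∑ i ∈ I ∪ J, h i ^ 2) *
          (Real.sqrt k * M + (l.map fun i => |h i|).sum / Real.sqrt k) := by
  have hnil : ∀ (M : ℝ), 0 ≤ M →
      |∑ j, A.mulVec (fun i => if i ∈ I ∪ J then h i else 0) j *
            A.mulVec (fun i => if i ∈ ([] : List (Fin n)) then h i else 0) j| ≤
        Real.sqrt 2 * δ * Real.sqrt (∑ i ∈ I ∪ J, h i ^ 2) *
          (Real.sqrt k * M + (([] : List (Fin n)).map fun i => |h i|).sum / Real.sqrt k) := by
    intro M hM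
    have hz : (fun i => if i ∈ ([] : List (Fin n)) then h i else 0) = (0 : Fin n → ℝ) := by
      funext i; simp
    rw [hz, Matrix.mulVec_zero]
    simp only [Pi.zero_apply, mul_zero, Finset.sum_const_zero, abs_zero, List.map_nil,
      List.sum_nil, zero_div, add_zero]
    have : 0 ≤ Real.sqrt k * M := mul_nonneg (Real.sqrt_nonneg _) hM
    have h2 : (0:ℝ) ≤ Real.sqrt 2 * δ * Real.sqrt (∑ i ∈ I ∪ J, h i ^ 2) := by positivity
    exact mul_nonneg h2 this
  intro N
  induction N with
  | zero =>
    intro l hlen _ _ _ M hM _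
    have : l = [] := List.eq_nil_of_length_eq_zero (Nat.le_zero.mp hlen)
    subst this
    exact hnil M hM
  | succ N ih =>
    intro l hlen hnd hpw hmem M hM hbound
    rcases eq_or_ne l [] with rfl | hne
    · exact hnil M hM
    set b := l.take k with hbdef
    set r := l.drop k with hrdef
    have hl : b ++ r = l := List.take_append_drop k l
    have hnd' : (b ++ r).Nodup := hl ▸ hnd
    have hpw' : (b ++ r).Pairwise (fun a b => |h b| ≤ |h a|) := hl ▸ hpw
    obtain ⟨hndb, hndr, hdisj⟩ := List.nodup_append.mp hnd'
    obtain ⟨hpwb, hpwr, hpwbr⟩ := List.pairwise_append.mp hpw'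
    have hmemb : ∀ i ∈ b, i ∈ Iᶜ \ J := fun i hi => hmem i (hl ▸ List.mem_append_left r hi)
    have hmemr : ∀ i ∈ r, i ∈ Iᶜ \ J := fun i hi => hmem i (hl ▸ List.mem_append_right b hi)
    -- split the vector
    have hsplit : (fun i => if i ∈ l then h i else 0) =
        (fun i => if i ∈ b then h i else 0) + (fun i => if i ∈ r then h i else 0) := by
      funext i
      simp only [Pi.add_apply]
      have hmem_iff : i ∈ l ↔ i ∈ b ∨ i ∈ r := by
        rw [← hl, List.mem_append]
      by_cases hib : i ∈ b <;> by_cases hir : i ∈ r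
      · exact absurd rfl (hdisj i hib i hir)
      · simp [hib, hir, hmem_iff.mpr (Or.inl hib)]
      · simp [hib, hir, hmem_iff.mpr (Or.inr hir)]
      · have hnl : i ∉ l := fun hx => (hmem_iff.mp hx).elim hib hir
        simp [hib, hir, hnl]
    -- block bound for b
    have hblockb := block_bound hk hδ0 hRIP h I J hI hJsub hJk b hmemb
      (by rw [hbdef]; exact le_trans (List.length_take_le k l) (le_refl k)) M hM
      (fun i hi => hbound i (hl ▸ List.mem_append_left r hi))
    -- new bound for the rest
    set M' : ℝ := ((b.map fun i => |h i|).sum) / k with hM'def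
    have hbsum_nonneg : 0 ≤ (b.map fun i => |h i|).sum := by
      apply List.sum_nonneg
      intro x hx
      obtain ⟨i, _, rfl⟩ := List.mem_map.mp hx
      exact abs_nonneg _
    have hM' : 0 ≤ M' := div_nonneg hbsum_nonneg (Nat.cast_nonneg k)
    have hboundr : ∀ i ∈ r, |h i| ≤ M' := by
      intro i hir
      have hrne : r ≠ [] := List.ne_nil_of_mem hir
      have hklen : k < l.length := by
        by_contra hcon
        push_neg at hcon
        exact hrne (List.drop_eq_nil_iff.mpr hcon)
      have hblen : b.length = k := by
        rw [hbdef, List.length_take]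
        omega
      have hle : ∀ x ∈ (b.map fun j => |h j|), |h i| ≤ x := by
        intro x hx
        obtain ⟨j, hj, rfl⟩ := List.mem_map.mp hx
        exact hpwbr j hj i hir
      have := List.card_nsmul_le_sum (b.map fun j => |h j|) |h i| hle
      rw [List.length_map, hblen, nsmul_eq_mul] at this
      rw [hM'def, le_div_iff₀ (by exact_mod_cast hk)]
      linarith
    have hrlen : r.length ≤ N := by
      have h1 : l.length ≤ N + 1 := hlen
      have h2 : 1 ≤ l.length := List.length_pos_iff.mpr hne
      rw [hrdef, List.length_drop]
      omega
    have hIHr := ih r hrlen hndr hpwr hmemr M' hM' hboundr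
    -- arithmetic to combine
    have hsqk : Real.sqrt k * Real.sqrt k = (k : ℝ) := Real.mul_self_sqrt (Nat.cast_nonneg k)
    have hsqkpos : 0 < Real.sqrt k := Real.sqrt_pos.mpr (by exact_mod_cast hk)
    have hM'eq : Real.sqrt k * M' = (b.map fun i => |h i|).sum / Real.sqrt k := by
      have hk1 : ((k:ℝ)) ≠ 0 := by positivity
      have hk2 : Real.sqrt k ≠ 0 := ne_of_gt hsqkpos
      rw [hM'def]
      field_simp
      linear_combination (b.map fun i => |h i|).sum * hsqk
    have hsum_split : (l.map fun i => |h i|).sum =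
        (b.map fun i => |h i|).sum + (r.map fun i => |h i|).sum := by
      rw [← hl, List.map_append, List.sum_append]
    set C := Real.sqrt 2 * δ * Real.sqrt (∑ i ∈ I ∪ J, h i ^ 2) with hC
    have hC0 : 0 ≤ C := by rw [hC]; positivity
    calc |∑ j, A.mulVec (fun i => if i ∈ I ∪ J then h i else 0) j *
            A.mulVec (fun i => if i ∈ l then h i else 0) j|
        = |(∑ j, A.mulVec (fun i => if i ∈ I ∪ J then h i else 0) j *
              A.mulVec (fun i => if i ∈ b then h i else 0) j) +
            ∑ j, A.mulVec (fun i => if i ∈ I ∪ J then h i else 0) j *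
              A.mulVec (fun i => if i ∈ r then h i else 0) j| := by
          rw [hsplit, Matrix.mulVec_add]
          simp only [Pi.add_apply, mul_add, Finset.sum_add_distrib]
      _ ≤ |∑ j, A.mulVec (fun i => if i ∈ I ∪ J then h i else 0) j *
              A.mulVec (fun i => if i ∈ b then h i else 0) j| +
            |∑ j, A.mulVec (fun i => if i ∈ I ∪ J then h i else 0) j *
              A.mulVec (fun i => if i ∈ r then h i else 0) j| := abs_add_le _ _
      _ ≤ C * (Real.sqrt k * M) + C * (Real.sqrt k * M' + (r.map fun i => |h i|).sum / Real.sqrt k) :=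
          add_le_add hblockb hIHr
      _ = C * (Real.sqrt k * M + ((b.map fun i => |h i|).sum + (r.map fun i => |h i|).sum) / Real.sqrt k) := by
          rw [add_div, ← hM'eq]; ring
      _ = C * (Real.sqrt k * M + (l.map fun i => |h i|).sum / Real.sqrt k) := by
          rw [hsum_split]


theorem stmt_18 (m n k : ℕ) (hk : 0 < k) (A : Matrix (Fin m) (Fin n) ℝ)
    (δ ε : ℝ) (hδ0 : 0 < δ) (hε : 0 ≤ ε)
    (hRIP : IsRIP A (2 * k) δ)
    (h : Fin n → ℝ) (I J : Finset (Fin n)) (hI : I.card ≤ k)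
    (hJsub : J ⊆ Iᶜ) (hJcard : J.card = min k Iᶜ.card)
    (hJmax : ∀ j ∈ J, ∀ i ∈ Iᶜ \ J, |h i| ≤ |h j|)
    (hAh : Real.sqrt (∑ j, A.mulVec h j ^ 2) ≤ 2 * ε) :
    (1 - δ) * Real.sqrt (∑ i ∈ I ∪ J, h i ^ 2) ≤
      Real.sqrt 2 * δ * (∑ i ∈ Iᶜ, |h i|) / Real.sqrt k +
        Real.sqrt (1 + δ) * (2 * ε) := by
  classical
  have hRIP' : IsRIP A (2*k) δ := hRIP
  have hδ0' : (0:ℝ) ≤ δ := le_of_lt hδ0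
  have hJk : J.card ≤ k := by rw [hJcard]; exact min_le_left _ _
  set x0 : Fin n → ℝ := fun i => if i ∈ I ∪ J then h i else 0 with hx0def
  set X0 : ℝ := ∑ i ∈ I ∪ J, h i ^ 2 with hX0def
  have hx0sq : ∑ i, x0 i ^ 2 = X0 := sum_sq_ite h (I ∪ J)
  have hX0nn : 0 ≤ X0 := Finset.sum_nonneg fun i _ => sq_nonneg _
  set S : ℝ := ∑ i ∈ Iᶜ, |h i| with hSdef
  have hSnn : 0 ≤ S := Finset.sum_nonneg fun i _ => abs_nonneg _
  set t : Finset (Fin n) := Iᶜ \ J with htdef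
  set l : List (Fin n) := t.toList.mergeSort (fun a b => decide (|h b| ≤ |h a|)) with hldef
  have hperm : l.Perm t.toList := List.mergeSort_perm _ _
  have hmeml : ∀ i : Fin n, i ∈ l ↔ i ∈ t := fun i => by
    rw [hperm.mem_iff, Finset.mem_toList]
  have hnd : l.Nodup := hperm.nodup_iff.mpr t.nodup_toList
  have hpw : l.Pairwise (fun a b => |h b| ≤ |h a|) := by
    have hs := List.pairwise_mergeSort (le := fun a b : Fin n => decide (|h b| ≤ |h a|))
      (fun a b c hab hbc => by
        simp only [decide_eq_true_eq] at *
        exact le_trans hbc hab)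
      (fun a b => by
        simp only [decide_eq_true_eq, Bool.or_eq_true]
        exact le_total (|h b|) (|h a|))
      t.toList
    rw [← hldef] at hs
    exact hs.imp (fun {a b} hab => by simpa using hab)
  set M : ℝ := (∑ i ∈ J, |h i|) / k with hMdef
  have hJsum_nn : 0 ≤ ∑ i ∈ J, |h i| := Finset.sum_nonneg fun i _ => abs_nonneg _
  have hMnn : 0 ≤ M := div_nonneg hJsum_nn (Nat.cast_nonneg k)
  have hbound : ∀ i ∈ l, |h i| ≤ M := by
    intro i hi
    have hit : i ∈ t := (hmeml i).mp hi
    have htpos : 0 < t.card := Finset.card_pos.mpr ⟨i, hit⟩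
    have hcs : t.card = Iᶜ.card - J.card := Finset.card_sdiff_of_subset hJsub
    have hJck : J.card = k := by omega
    have hsum : (J.card : ℝ) * |h i| ≤ ∑ j ∈ J, |h j| := by
      calc (J.card : ℝ) * |h i| = ∑ _j ∈ J, |h i| := by rw [Finset.sum_const, nsmul_eq_mul]
        _ ≤ ∑ j ∈ J, |h j| := Finset.sum_le_sum fun j hj => hJmax j hj i hit
    rw [hMdef, le_div_iff₀ (by exact_mod_cast hk)]
    rw [hJck] at hsum
    linarith
  have hkey := tail_bound hk hδ0' hRIP' h I J hI hJsub hJk l.length l (le_refl _) hnd hpw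
    (fun i hi => (hmeml i).mp hi) M hMnn hbound
  -- identify the list sum with the Finset sum
  have hlsum : (l.map fun i => |h i|).sum = ∑ i ∈ t, |h i| := by
    rw [List.Perm.sum_eq (hperm.map _), Finset.sum]
    conv_rhs => rw [← Multiset.coe_toList t.val]
    rw [Multiset.map_coe, Multiset.sum_coe]
    rfl
  have hsqk : Real.sqrt k * Real.sqrt k = (k : ℝ) := Real.mul_self_sqrt (Nat.cast_nonneg k)
  have hsqkpos : 0 < Real.sqrt k := Real.sqrt_pos.mpr (by exact_mod_cast hk)
  have hMS : Real.sqrt k * M + (l.map fun i => |h i|).sum / Real.sqrt k = S / Real.sqrt k := by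
    have hSsplit : (∑ i ∈ t, |h i|) + ∑ i ∈ J, |h i| = S := by
      rw [hSdef, htdef]
      exact Finset.sum_sdiff hJsub
    have hk1 : ((k:ℝ)) ≠ 0 := by positivity
    have hk2 : Real.sqrt k ≠ 0 := ne_of_gt hsqkpos
    have e1 : Real.sqrt k * ((∑ i ∈ J, |h i|) / k) = (∑ i ∈ J, |h i|) / Real.sqrt k := by
      field_simp
      linear_combination (∑ i ∈ J, |h i|) * hsqk
    rw [hlsum, hMdef, e1, ← add_div,
      show (∑ i ∈ J, |h i|) + ∑ i ∈ t, |h i| = S by linarith]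
  rw [hMS] at hkey
  rw [← hX0def] at hkey
  -- decompose h
  set vl : Fin n → ℝ := fun i => if i ∈ l then h i else 0 with hvldef
  have hhd : h = x0 + vl := by
    funext i
    simp only [Pi.add_apply, hx0def, hvldef]
    by_cases hiIJ : i ∈ I ∪ J
    · have hnt : i ∉ t := by
        rw [htdef, Finset.mem_sdiff, Finset.mem_compl]
        rcases Finset.mem_union.mp hiIJ with hiI | hiJ
        · intro hc; exact hc.1 hiI
        · intro hc; exact hc.2 hiJ
      have hnl : i ∉ l := fun hc => hnt ((hmeml i).mp hc)
      simp [hiIJ, hnl]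
    · have hiI : i ∉ I := fun hc => hiIJ (Finset.mem_union_left _ hc)
      have hiJ : i ∉ J := fun hc => hiIJ (Finset.mem_union_right _ hc)
      have hit : i ∈ t := by
        rw [htdef, Finset.mem_sdiff, Finset.mem_compl]
        exact ⟨hiI, hiJ⟩
      have hil : i ∈ l := (hmeml i).mpr hit
      simp [hiIJ, hil]
  -- RIP on x0
  have hx0sparse : IsSparse (2*k) x0 := by
    refine sparse_of_subset (S := I ∪ J) (fun i hi => by simp only [hx0def]; exact if_neg hi) ?_
    calc (I ∪ J).card ≤ I.card + J.card := Finset.card_union_le I J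
      _ ≤ 2 * k := by omega
  have hrip := hRIP' x0 hx0sparse
  rw [hx0sq] at hrip
  -- dot identity
  have hAhd : A.mulVec h = A.mulVec x0 + A.mulVec vl := by
    rw [hhd, Matrix.mulVec_add]
  have hdotid : ∑ j, A.mulVec x0 j * A.mulVec h j =
      (∑ j, A.mulVec x0 j ^ 2) + ∑ j, A.mulVec x0 j * A.mulVec vl j := by
    rw [hAhd]
    simp only [Pi.add_apply, mul_add, Finset.sum_add_distrib, sq]
  -- Cauchy-Schwarz
  have hAx0nn : 0 ≤ ∑ j, A.mulVec x0 j ^ 2 := Finset.sum_nonneg fun j _ => sq_nonneg _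
  have hAhnn : 0 ≤ ∑ j, A.mulVec h j ^ 2 := Finset.sum_nonneg fun j _ => sq_nonneg _
  have hcs : ∑ j, A.mulVec x0 j * A.mulVec h j ≤
      Real.sqrt (∑ j, A.mulVec x0 j ^ 2) * Real.sqrt (∑ j, A.mulVec h j ^ 2) := by
    have h1 := Finset.sum_mul_sq_le_sq_mul_sq Finset.univ (A.mulVec x0) (A.mulVec h)
    calc ∑ j, A.mulVec x0 j * A.mulVec h j
        ≤ |∑ j, A.mulVec x0 j * A.mulVec h j| := le_abs_self _
      _ = Real.sqrt ((∑ j, A.mulVec x0 j * A.mulVec h j) ^ 2) := (Real.sqrt_sq_eq_abs _).symm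
      _ ≤ Real.sqrt ((∑ j, A.mulVec x0 j ^ 2) * ∑ j, A.mulVec h j ^ 2) := Real.sqrt_le_sqrt h1
      _ = _ := Real.sqrt_mul hAx0nn _
  have hAx0up : Real.sqrt (∑ j, A.mulVec x0 j ^ 2) ≤ Real.sqrt (1 + δ) * Real.sqrt X0 := by
    calc Real.sqrt (∑ j, A.mulVec x0 j ^ 2) ≤ Real.sqrt ((1 + δ) * X0) :=
          Real.sqrt_le_sqrt hrip.2
      _ = Real.sqrt (1 + δ) * Real.sqrt X0 := Real.sqrt_mul (by linarith) _
  have hdot1 : ∑ j, A.mulVec x0 j * A.mulVec h j ≤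
      Real.sqrt (1 + δ) * Real.sqrt X0 * (2 * ε) := by
    calc ∑ j, A.mulVec x0 j * A.mulVec h j
        ≤ Real.sqrt (∑ j, A.mulVec x0 j ^ 2) * Real.sqrt (∑ j, A.mulVec h j ^ 2) := hcs
      _ ≤ (Real.sqrt (1 + δ) * Real.sqrt X0) * (2 * ε) := by
          apply mul_le_mul hAx0up hAh (Real.sqrt_nonneg _)
          positivity
  -- main chain
  have hchain : (1 - δ) * X0 ≤
      Real.sqrt 2 * δ * Real.sqrt X0 * (S / Real.sqrt k) +
        Real.sqrt (1 + δ) * Real.sqrt X0 * (2 * ε) := by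
    have h1 : (1 - δ) * X0 ≤ ∑ j, A.mulVec x0 j ^ 2 := hrip.1
    have h2 : ∑ j, A.mulVec x0 j ^ 2 =
        (∑ j, A.mulVec x0 j * A.mulVec h j) - ∑ j, A.mulVec x0 j * A.mulVec vl j := by
      linarith [hdotid]
    have h3 : -(∑ j, A.mulVec x0 j * A.mulVec vl j) ≤
        Real.sqrt 2 * δ * Real.sqrt X0 * (S / Real.sqrt k) :=
      le_trans (neg_le_abs _) hkey
    linarith
  -- conclude
  rcases eq_or_lt_of_le hX0nn with hX0z | hX0p
  · rw [← hX0z, Real.sqrt_zero, mul_zero]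
    have hr1 : 0 ≤ Real.sqrt 2 * δ * S / Real.sqrt k := by positivity
    have hr2 : 0 ≤ Real.sqrt (1 + δ) * (2 * ε) := by positivity
    linarith
  · have hsX0 : 0 < Real.sqrt X0 := Real.sqrt_pos.mpr hX0p
    have hmss : Real.sqrt X0 * Real.sqrt X0 = X0 := Real.mul_self_sqrt hX0nn
    have hgoal : (1 - δ) * Real.sqrt X0 ≤
        Real.sqrt 2 * δ * S / Real.sqrt k + Real.sqrt (1 + δ) * (2 * ε) := by
      rw [← mul_le_mul_iff_left₀ hsX0]
      calc (1 - δ) * Real.sqrt X0 * Real.sqrt X0 = (1 - δ) * X0 := by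
            rw [mul_assoc, hmss]
        _ ≤ Real.sqrt 2 * δ * Real.sqrt X0 * (S / Real.sqrt k) +
              Real.sqrt (1 + δ) * Real.sqrt X0 * (2 * ε) := hchain
        _ = (Real.sqrt 2 * δ * S / Real.sqrt k + Real.sqrt (1 + δ) * (2 * ε)) *
              Real.sqrt X0 := by ring
    exact hgoal
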